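/- The admissible set 𝒢 is convex, and it is invariant under positive scaling: for every state U ∈ 𝒢 and every real λ > 0, the componentwise-scaled state λU = (λρ, λm, λE) belongs to 𝒢. -/

import Mathlib

open Matrix

noncomputable section

/-- A state is a triple `(ρ, m, E)` with `ρ : ℝ`, `m : ℝ²`, `E` a 2×2 real matrix. -/
abbrev Mat2 := Matrix (Fin 2) (Fin 2) ℝ

/-- The pressure tensor `p(U) = 2E - (1/ρ) m mᵀ`. -/
def pTensor (ρ : ℝ) (m : Fin 2 → ℝ) (E : Mat2) : Mat2 :=
  (2 : ℝ) • E - ρ⁻¹ • vecMulVec m m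

/-- `φ(U; z, u*) = zᵀEz − (m·z)(u*·z) + (ρ/2)(u*·z)²`. -/
def phi (ρ : ℝ) (m : Fin 2 → ℝ) (E : Mat2) (z u : Fin 2 → ℝ) : ℝ :=
  z ⬝ᵥ (E *ᵥ z) - (m ⬝ᵥ z) * (u ⬝ᵥ z) + (ρ / 2) * (u ⬝ᵥ z) ^ 2

/-- The admissible set `𝒢`: states with positive density and positive definite pressure tensor. -/
def G : Set (ℝ × (Fin 2 → ℝ) × Mat2) :=
  {U | 0 < U.1 ∧ (pTensor U.1 U.2.1 U.2.2).PosDef}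

/-- The closed admissible set `𝒢̄`: states (so `E` symmetric) with `ρ ≥ 0` and
`φ(U; z, u*) ≥ 0` for all `z, u*`. -/
def Gbar : Set (ℝ × (Fin 2 → ℝ) × Mat2) :=
  {U | 0 ≤ U.1 ∧ U.2.2.IsSymm ∧ ∀ z u : Fin 2 → ℝ, 0 ≤ phi U.1 U.2.1 U.2.2 z u}

/-- Scalar core of the convexity argument. -/
lemma key_scalar {a b p q x y s t : ℝ} (ha : 0 ≤ a) (hb : 0 ≤ b) (hab : a + b = 1)
    (hp : 0 < p) (hq : 0 < q) (h1 : 0 < 2*s - p⁻¹*x^2) (h2 : 0 < 2*t - q⁻¹*y^2) :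
    0 < 2*(a*s+b*t) - (a*p+b*q)⁻¹*(a*x+b*y)^2 := by
  have h1' : x^2 < 2*s*p := by
    have := (inv_mul_lt_iff₀ hp).mp (by linarith : p⁻¹*x^2 < 2*s)
    nlinarith
  have h2' : y^2 < 2*t*q := by
    have := (inv_mul_lt_iff₀ hq).mp (by linarith : q⁻¹*y^2 < 2*t)
    nlinarith
  rcases ha.lt_or_eq with hA | hA
  · have hc : 0 < a*p+b*q := by nlinarith [mul_nonneg hb hq.le, mul_pos hA hp]
    rw [sub_pos, inv_mul_lt_iff₀ hc]
    nlinarith [mul_pos (mul_pos (mul_pos hA hA) (mul_pos hp hq)) (sub_pos.mpr h1'),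
      mul_nonneg (mul_nonneg (mul_nonneg ha hb) (mul_pos hq hq).le) (sub_pos.mpr h1').le,
      mul_nonneg (mul_nonneg (mul_nonneg ha hb) (mul_pos hp hp).le) (sub_pos.mpr h2').le,
      mul_nonneg (mul_nonneg ha hb) (sq_nonneg (x*q - y*p)),
      mul_nonneg (mul_nonneg (mul_nonneg hb hb) (mul_pos hp hq).le) (sub_pos.mpr h2').le,
      mul_pos hp hq]
  · have hb1 : b = 1 := by linarith
    subst hb1
    simp only [← hA]
    simp
    linarith [h2]

lemma quad_pTensor (ρ : ℝ) (m : Fin 2 → ℝ) (E : Mat2) (z : Fin 2 → ℝ) :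
    z ⬝ᵥ (pTensor ρ m E *ᵥ z) = 2 * (z ⬝ᵥ (E *ᵥ z)) - ρ⁻¹ * (m ⬝ᵥ z)^2 := by
  simp [pTensor, dotProduct, mulVec, vecMulVec, Fin.sum_univ_two]
  ring

lemma isHermitian_iff' (M : Mat2) : M.IsHermitian ↔ ∀ i j, M j i = M i j := by
  constructor
  · intro h i j
    have := congrFun (congrFun h i) j
    simpa using this
  · intro h
    ext i j
    simp [Matrix.conjTranspose_apply, h i j]

lemma pTensor_herm_iff (ρ : ℝ) (m : Fin 2 → ℝ) (E : Mat2) :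
    (pTensor ρ m E).IsHermitian ↔ ∀ i j, E j i = E i j := by
  rw [isHermitian_iff']
  constructor
  · intro h i j
    have := h i j
    simp [pTensor, vecMulVec] at this
    nlinarith [this]
  · intro h i j
    simp only [pTensor, Matrix.sub_apply, Matrix.smul_apply, vecMulVec_apply, smul_eq_mul]
    rw [h i j]
    ring

/-- The admissible set `𝒢` is convex and invariant under positive scaling. -/
theorem admissible_convex_and_scale_invariant :
    Convex ℝ G ∧ ∀ U ∈ G, ∀ lam : ℝ, 0 < lam → lam • U ∈ G := by
  constructor
  · intro U hU V hV a b ha hb hab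
    have hpU := hU.1
    have hHU := hU.2.1
    have hQU := (posDef_iff_dotProduct_mulVec.mp hU.2).2
    have hpV := hV.1
    have hHV := hV.2.1
    have hQV := (posDef_iff_dotProduct_mulVec.mp hV.2).2
    have hρ : (0:ℝ) < a * U.1 + b * V.1 := by
      rcases ha.lt_or_eq with hA | hA
      · nlinarith [mul_nonneg hb hpV.le, mul_pos hA hpU]
      · have hb1 : b = 1 := by linarith
        simp [← hA, hb1, hpV]
    have hfst : (a • U + b • V).1 = a * U.1 + b * V.1 := by simp [Prod.smul_def]
    have hm : (a • U + b • V).2.1 = a • U.2.1 + b • V.2.1 := by simp [Prod.smul_def]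
    have hE : (a • U + b • V).2.2 = a • U.2.2 + b • V.2.2 := by simp [Prod.smul_def]
    refine ⟨by rw [hfst]; exact hρ, Matrix.PosDef.of_dotProduct_mulVec_pos ?_ ?_⟩
    · rw [hfst, hm, hE, pTensor_herm_iff]
      intro i j
      have h1 := (pTensor_herm_iff U.1 U.2.1 U.2.2).mp hHU i j
      have h2 := (pTensor_herm_iff V.1 V.2.1 V.2.2).mp hHV i j
      simp [Matrix.add_apply, Matrix.smul_apply, h1, h2]
    · intro z hz
      rw [hfst, hm, hE]
      have hquadU := hQU hz
      have hquadV := hQV hz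
      rw [star_trivial, quad_pTensor] at hquadU hquadV ⊢
      have hdot : (a • U.2.1 + b • V.2.1) ⬝ᵥ z = a * (U.2.1 ⬝ᵥ z) + b * (V.2.1 ⬝ᵥ z) := by
        simp [add_dotProduct, smul_dotProduct]
      have hEq : z ⬝ᵥ ((a • U.2.2 + b • V.2.2) *ᵥ z)
          = a * (z ⬝ᵥ (U.2.2 *ᵥ z)) + b * (z ⬝ᵥ (V.2.2 *ᵥ z)) := by
        simp [add_mulVec, Matrix.smul_mulVec, dotProduct_add, dotProduct_smul]
        ring
      rw [hdot, hEq]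
      exact key_scalar ha hb hab hpU hpV hquadU hquadV
  · rintro U ⟨hρ, hH, hQ⟩ lam hlam
    have hfst : (lam • U).1 = lam * U.1 := rfl
    refine ⟨by rw [hfst]; positivity, Matrix.PosDef.of_dotProduct_mulVec_pos ?_ ?_⟩
    · rw [pTensor_herm_iff]
      intro i j
      have h1 := (pTensor_herm_iff U.1 U.2.1 U.2.2).mp hH i j
      show (lam • U.2.2) j i = (lam • U.2.2) i j
      simp [Matrix.smul_apply, h1]
    · intro z hz
      have h := (posDef_iff_dotProduct_mulVec.mp ⟨hH, hQ⟩).2 hz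
      rw [star_trivial, quad_pTensor] at h ⊢
      show (0:ℝ) < 2 * (z ⬝ᵥ ((lam • U.2.2) *ᵥ z)) - (lam * U.1)⁻¹ * ((lam • U.2.1) ⬝ᵥ z)^2
      have hEq : z ⬝ᵥ ((lam • U.2.2) *ᵥ z) = lam * (z ⬝ᵥ (U.2.2 *ᵥ z)) := by
        simp [Matrix.smul_mulVec, dotProduct_smul]
        ring
      have hdot : (lam • U.2.1) ⬝ᵥ z = lam * (U.2.1 ⬝ᵥ z) := by simp [smul_dotProduct]
      have heq2 : (lam * U.1)⁻¹ * (lam * (U.2.1 ⬝ᵥ z))^2 = lam * (U.1⁻¹ * (U.2.1 ⬝ᵥ z)^2) := by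
        rw [mul_inv, mul_pow]
        field_simp
      rw [hEq, hdot, heq2]
      nlinarith [mul_pos hlam (by linarith : (0:ℝ) < 2 * (z ⬝ᵥ (U.2.2 *ᵥ z)) - U.1⁻¹ * (U.2.1 ⬝ᵥ z)^2)]
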